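/- arXiv:math/0612840 — 2 statements merged into one kernel-verified Lean document; each statement's English description precedes it below -/
import Mathlib

section
/- Let (u_k) be a sequence of positive reals and let (y_n) be the symmetric series built from (u_k), i.e. y_{2k−1} = u_k and y_{2k} = −u_k. Suppose the set X = {u_k : k ∈ ℕ} ∪ {−u_k : k ∈ ℕ} of values of the series is ε-separated for some ε > 0, and suppose there exists at least one value of infinite order (i.e. some e ∈ X with {n : y_n = e} infinite). Then SR_2(Σ y_n) = {c_1 e_1 + ⋯ + c_r e_r : r ∈ ℕ, e_1,…,e_r ∈ X each of infinite order, c_1,…,c_r ∈ ℤ, Σ_{j=1}^r c_j is even}. -/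
open Filter Topology

/-- The 2n sum range of the series `Σ y_n`. -/
def SR2 (y : ℕ → ℝ) : Set ℝ :=
  {s : ℝ | ∃ π : Equiv.Perm ℕ,
    Tendsto (fun n : ℕ => ∑ k ∈ Finset.range (2 * n), y (π k)) atTop (nhds s)}

/-- A set `E ⊆ ℝ` is `ε`-separated if all pairwise distances between distinct
elements exceed `ε`. -/
def IsSeparated' (ε : ℝ) (E : Set ℝ) : Prop :=
  ∀ a ∈ E, ∀ b ∈ E, a ≠ b → ε < |a - b|

lemma symser_mem_X (u : ℕ → ℝ) (y : ℕ → ℝ)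
    (hy : ∀ k : ℕ, y (2 * k) = u k ∧ y (2 * k + 1) = -u k) (n : ℕ) :
    y n ∈ Set.range u ∪ Set.range (fun k => -u k) := by
  rcases Nat.even_or_odd' n with ⟨k, hk | hk⟩
  · left; exact ⟨k, by rw [hk, (hy k).1]⟩
  · right; exact ⟨k, by rw [hk, (hy k).2]⟩

lemma symser_X_pos (u : ℕ → ℝ) (hu : ∀ k, 0 < u k) {v : ℝ}
    (hv : v ∈ Set.range u ∪ Set.range (fun k => -u k)) : v ≠ 0 := by
  rcases hv with ⟨k, rfl⟩ | ⟨k, rfl⟩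
  · exact ne_of_gt (hu k)
  · simpa using ne_of_lt (neg_neg_iff_pos.mpr (hu k)) -- maybe wrong

lemma symser_X_neg_mem (u : ℕ → ℝ) {v : ℝ}
    (hv : v ∈ Set.range u ∪ Set.range (fun k => -u k)) :
    -v ∈ Set.range u ∪ Set.range (fun k => -u k) := by
  rcases hv with ⟨k, rfl⟩ | ⟨k, rfl⟩
  · right; exact ⟨k, rfl⟩
  · left; exact ⟨k, by simp⟩

lemma symser_sep_eq_neg (u : ℕ → ℝ) (ε : ℝ)
    (hsep : IsSeparated' ε (Set.range u ∪ Set.range (fun k => -u k)))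
    {a b : ℝ} (ha : a ∈ Set.range u ∪ Set.range (fun k => -u k))
    (hb : b ∈ Set.range u ∪ Set.range (fun k => -u k))
    (h : |a + b| ≤ ε) : b = -a := by
  by_contra hne
  have := hsep b hb (-a) (symser_X_neg_mem u ha) hne
  rw [sub_neg_eq_add, add_comm] at this
  linarith

lemma symser_y_eq_pos (u : ℕ → ℝ) (hu : ∀ k, 0 < u k) (y : ℕ → ℝ)
    (hy : ∀ k : ℕ, y (2 * k) = u k ∧ y (2 * k + 1) = -u k)
    {f : ℝ} (hf : 0 < f) (n : ℕ) :
    y n = f ↔ ∃ k, n = 2 * k ∧ u k = f := by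
  constructor
  · intro h
    rcases Nat.even_or_odd' n with ⟨k, hk | hk⟩
    · exact ⟨k, hk, by rw [hk, (hy k).1] at h; exact h⟩
    · rw [hk, (hy k).2] at h
      exact absurd h (by have := hu k; intro h; linarith)
  · rintro ⟨k, rfl, hk⟩
    rw [(hy k).1, hk]

lemma symser_y_eq_neg (u : ℕ → ℝ) (hu : ∀ k, 0 < u k) (y : ℕ → ℝ)
    (hy : ∀ k : ℕ, y (2 * k) = u k ∧ y (2 * k + 1) = -u k)
    {f : ℝ} (hf : 0 < f) (n : ℕ) :
    y n = -f ↔ ∃ k, n = 2 * k + 1 ∧ u k = f := by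
  constructor
  · intro h
    rcases Nat.even_or_odd' n with ⟨k, hk | hk⟩
    · rw [hk, (hy k).1] at h
      exact absurd h (by have := hu k; intro h; linarith)
    · exact ⟨k, hk, by rw [hk, (hy k).2] at h; linarith⟩
  · rintro ⟨k, rfl, hk⟩
    rw [(hy k).2, hk]

lemma symser_K_infinite (u : ℕ → ℝ) (hu : ∀ k, 0 < u k) (y : ℕ → ℝ)
    (hy : ∀ k : ℕ, y (2 * k) = u k ∧ y (2 * k + 1) = -u k)
    {v : ℝ} (h : {n : ℕ | y n = v}.Infinite) :
    {k : ℕ | u k = |v|}.Infinite := by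
  by_contra hfin
  rw [Set.not_infinite] at hfin
  apply h
  have hsub : {n : ℕ | y n = v} ⊆
      (fun k => 2 * k) '' {k | u k = |v|} ∪ (fun k => 2 * k + 1) '' {k | u k = |v|} := by
    intro n hn
    rcases Nat.even_or_odd' n with ⟨k, hk | hk⟩
    · left
      refine ⟨k, ?_, hk.symm⟩
      have : y n = u k := by rw [hk]; exact (hy k).1
      have hv : v = u k := by rw [← hn, this]
      simp only [Set.mem_setOf_eq, hv, abs_of_pos (hu k)]
    · right
      refine ⟨k, ?_, hk.symm⟩
      have : y n = -u k := by rw [hk]; exact (hy k).2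
      have hv : v = -u k := by rw [← hn, this]
      simp only [Set.mem_setOf_eq, hv]
      rw [abs_neg, abs_of_pos (hu k)]
  exact Set.Finite.subset ((hfin.image _).union (hfin.image _)) hsub

lemma symser_order_infinite_pos (u : ℕ → ℝ) (y : ℕ → ℝ)
    (hy : ∀ k : ℕ, y (2 * k) = u k ∧ y (2 * k + 1) = -u k)
    {f : ℝ} (h : {k : ℕ | u k = f}.Infinite) :
    {n : ℕ | y n = f}.Infinite := by
  have : (fun k => 2 * k) '' {k | u k = f} ⊆ {n | y n = f} := by
    rintro n ⟨k, hk, rfl⟩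
    simp only [Set.mem_setOf_eq] at *
    rw [(hy k).1, hk]
  exact ((h.image (fun a b => by omega)).mono this)

lemma symser_fwd (u : ℕ → ℝ) (hu : ∀ k, 0 < u k) (y : ℕ → ℝ)
    (hy : ∀ k : ℕ, y (2 * k) = u k ∧ y (2 * k + 1) = -u k)
    (ε : ℝ) (hε : ε > 0)
    (hsep : IsSeparated' ε (Set.range u ∪ Set.range (fun k => -u k)))
    {s : ℝ} (hs : s ∈ SR2 y) :
    ∃ (r : ℕ) (e : Fin r → ℝ) (c : Fin r → ℤ),
      (∀ i, e i ∈ Set.range u ∪ Set.range (fun k => -u k) ∧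
        {n : ℕ | y n = e i}.Infinite) ∧
      Even (∑ i, c i) ∧ s = ∑ i, (c i : ℝ) * e i := by
  classical
  obtain ⟨π, hπ⟩ := hs
  set S : ℕ → ℝ := fun n => ∑ k ∈ Finset.range (2 * n), y (π k) with hSdef
  have hdiff : ∀ n, S (n + 1) - S n = y (π (2 * n)) + y (π (2 * n + 1)) := by
    intro n
    have h2 : 2 * (n + 1) = (2 * n) + 1 + 1 := by ring
    simp only [hSdef, h2, Finset.sum_range_succ]
    ring
  have h0 : Tendsto (fun n => S (n + 1) - S n) atTop (nhds 0) := by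
    have := Tendsto.sub (hπ.comp (tendsto_add_atTop_nat 1)) hπ
    simpa using this
  obtain ⟨N, hN⟩ := (Metric.tendsto_atTop.mp h0) ε hε
  have key : ∀ n, N ≤ n → y (π (2 * n + 1)) = - y (π (2 * n)) := by
    intro n hn
    have h1 := hN n hn
    rw [Real.dist_eq, sub_zero, hdiff] at h1
    exact symser_sep_eq_neg u ε hsep (symser_mem_X u y hy _) (symser_mem_X u y hy _)
      (le_of_lt h1)
  have hconst : ∀ n, N ≤ n → S n = S N := by
    intro n hn
    induction n, hn using Nat.le_induction with
    | base => rfl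
    | succ n hn ih =>
        have h1 := hdiff n
        rw [key n hn] at h1
        have : S (n + 1) = S n := by linarith
        rw [this, ih]
  have hsS : s = S N := by
    have h2 : Tendsto S atTop (nhds (S N)) := by
      apply Tendsto.congr' _ tendsto_const_nhds
      filter_upwards [eventually_ge_atTop N] with n hn
      exact (hconst n hn).symm
    exact tendsto_nhds_unique hπ h2
  -- counting
  set T : Finset ℕ := Finset.range (2 * N) with hT
  set cnt : ℝ → ℕ := fun v => (T.filter (fun k => y (π k) = v)).card with hcnt
  set V : Finset ℝ := T.image (fun k => y (π k)) with hV
  have hmaps : ∀ k ∈ T, y (π k) ∈ V := fun k hk => Finset.mem_image_of_mem _ hk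
  have hsumV : S N = ∑ v ∈ V, (cnt v : ℝ) * v := by
    show (∑ k ∈ T, y (π k)) = _
    rw [← Finset.sum_fiberwise_of_maps_to hmaps (fun k => y (π k))]
    apply Finset.sum_congr rfl
    intro v hv
    rw [Finset.sum_congr rfl (fun k hk => (Finset.mem_filter.mp hk).2),
      Finset.sum_const, nsmul_eq_mul]
  have hcardV : ∑ v ∈ V, cnt v = 2 * N := by
    rw [hcnt]
    rw [← Finset.card_eq_sum_card_fiberwise hmaps, hT, Finset.card_range]
  have hcnt_zero : ∀ v, v ∉ V → cnt v = 0 := by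
    intro v hv
    rw [hcnt]
    simp only [Finset.card_eq_zero, Finset.filter_eq_empty_iff]
    intro k hk h
    exact hv (h ▸ hmaps k hk)
  set W : Finset ℝ := V ∪ V.image (fun v => -v) with hW
  have hVW : V ⊆ W := Finset.subset_union_left
  have hWsymm : ∀ v ∈ W, -v ∈ W := by
    intro v hv
    rw [hW, Finset.mem_union] at hv ⊢
    rcases hv with hv | hv
    · right; exact Finset.mem_image_of_mem _ hv
    · left; obtain ⟨w, hw, rfl⟩ := Finset.mem_image.mp hv; simpa using hw
  have hWne : ∀ v ∈ W, v ≠ 0 := by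
    intro v hv
    rw [hW, Finset.mem_union] at hv
    rcases hv with hv | hv
    · obtain ⟨k, _, rfl⟩ := Finset.mem_image.mp hv
      exact symser_X_pos u hu (symser_mem_X u y hy _)
    · obtain ⟨w, hw, rfl⟩ := Finset.mem_image.mp hv
      obtain ⟨k, _, rfl⟩ := Finset.mem_image.mp hw
      simpa using symser_X_pos u hu (symser_mem_X u y hy (π k))
  have hsumW : S N = ∑ v ∈ W, (cnt v : ℝ) * v := by
    rw [hsumV]
    apply Finset.sum_subset hVW
    intro v _ hv
    rw [hcnt_zero v hv]
    simp
  have hcardW : ∑ v ∈ W, cnt v = 2 * N := by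
    rw [← hcardV]
    symm
    apply Finset.sum_subset hVW
    intro v _ hv
    exact hcnt_zero v hv
  set Wpos : Finset ℝ := W.filter (fun v => 0 < v) with hWpos
  have hWsplit : W = Wpos ∪ Wpos.image (fun v => -v) := by
    apply Finset.Subset.antisymm
    · intro v hv
      rcases lt_trichotomy 0 v with h | h | h
      · exact Finset.mem_union_left _ (Finset.mem_filter.mpr ⟨hv, h⟩)
      · exact absurd h.symm (hWne v hv)
      · apply Finset.mem_union_right
        refine Finset.mem_image.mpr ⟨-v, Finset.mem_filter.mpr ⟨hWsymm v hv, by linarith⟩, by ring⟩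
    · intro v hv
      rcases Finset.mem_union.mp hv with h | h
      · exact (Finset.mem_filter.mp h).1
      · obtain ⟨w, hw, rfl⟩ := Finset.mem_image.mp h
        exact hWsymm w (Finset.mem_filter.mp hw).1
  have hdisj : Disjoint Wpos (Wpos.image (fun v => -v)) := by
    rw [Finset.disjoint_left]
    intro v hv hv'
    obtain ⟨w, hw, rfl⟩ := Finset.mem_image.mp hv'
    have h1 := (Finset.mem_filter.mp hv).2
    have h2 := (Finset.mem_filter.mp hw).2
    linarith
  have hneg_inj : Set.InjOn (fun v : ℝ => -v) ↑Wpos := fun a _ b _ h => by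
    simpa using h
  have hpair_sum : ∀ g : ℝ → ℝ, ∑ v ∈ W, g v = ∑ f ∈ Wpos, (g f + g (-f)) := by
    intro g
    rw [hWsplit, Finset.sum_union hdisj, Finset.sum_image (fun a ha b hb h => hneg_inj ha hb h),
      ← Finset.sum_add_distrib]
  have hsum2 : S N = ∑ f ∈ Wpos, ((cnt f : ℝ) - (cnt (-f) : ℝ)) * f := by
    rw [hsumW, hpair_sum]
    apply Finset.sum_congr rfl
    intro f _
    ring
  have hcard2 : ∑ f ∈ Wpos, (cnt f + cnt (-f)) = 2 * N := by
    rw [← hcardW]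
    have := hpair_sum  -- only for ℝ; redo for ℕ
    rw [hWsplit, Finset.sum_union hdisj, Finset.sum_image (fun a ha b hb h => hneg_inj ha hb h),
      ← Finset.sum_add_distrib]
  have hfo : ∀ f ∈ Wpos, ({k : ℕ | u k = f}).Finite → cnt f = cnt (-f) := by
    intro f hfW hKfin
    have hf : 0 < f := (Finset.mem_filter.mp hfW).2
    set Kf : Set ℕ := {k | u k = f} with hKf
    set A : Set ℕ := {p | y (π p) = f} with hA
    set A' : Set ℕ := {p | y (π p) = -f} with hA'
    set lt2N : Set ℕ := {p | p < 2 * N} with hlt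
    have hAeq : A = (fun k => π.symm (2 * k)) '' Kf := by
      ext p
      simp only [hA, Set.mem_setOf_eq, Set.mem_image, hKf]
      rw [symser_y_eq_pos u hu y hy hf]
      constructor
      · rintro ⟨k, hk1, hk2⟩
        exact ⟨k, hk2, by rw [← hk1, Equiv.symm_apply_apply]⟩
      · rintro ⟨k, hk2, rfl⟩
        exact ⟨k, by rw [Equiv.apply_symm_apply], hk2⟩
    have hA'eq : A' = (fun k => π.symm (2 * k + 1)) '' Kf := by
      ext p
      simp only [hA', Set.mem_setOf_eq, Set.mem_image, hKf]
      rw [symser_y_eq_neg u hu y hy hf]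
      constructor
      · rintro ⟨k, hk1, hk2⟩
        exact ⟨k, hk2, by rw [← hk1, Equiv.symm_apply_apply]⟩
      · rintro ⟨k, hk2, rfl⟩
        exact ⟨k, by rw [Equiv.apply_symm_apply], hk2⟩
    have hinj1 : Function.Injective (fun k : ℕ => π.symm (2 * k)) := by
      intro a b h
      have := π.symm.injective h
      omega
    have hinj2 : Function.Injective (fun k : ℕ => π.symm (2 * k + 1)) := by
      intro a b h
      have := π.symm.injective h
      omega
    have hAfin : A.Finite := hAeq ▸ hKfin.image _
    have hA'fin : A'.Finite := hA'eq ▸ hKfin.image _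
    have hAcard : A.ncard = Kf.ncard := by
      rw [hAeq, Set.ncard_image_of_injective _ hinj1]
    have hA'card : A'.ncard = Kf.ncard := by
      rw [hA'eq, Set.ncard_image_of_injective _ hinj2]
    have hsplitA : (A ∩ lt2N).ncard + (A \ lt2N).ncard = A.ncard :=
      Set.ncard_inter_add_ncard_diff_eq_ncard A lt2N hAfin
    have hsplitA' : (A' ∩ lt2N).ncard + (A' \ lt2N).ncard = A'.ncard :=
      Set.ncard_inter_add_ncard_diff_eq_ncard A' lt2N hA'fin
    have hcntf : cnt f = (A ∩ lt2N).ncard := by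
      show (Finset.filter (fun k => y (π k) = f) T).card = _
      rw [← Set.ncard_coe_finset]
      congr 1
      ext p
      simp only [Finset.coe_filter, Set.mem_setOf_eq, hT, Finset.mem_range, hA, hlt,
        Set.mem_inter_iff, and_comm]
    have hcntf' : cnt (-f) = (A' ∩ lt2N).ncard := by
      show (Finset.filter (fun k => y (π k) = -f) T).card = _
      rw [← Set.ncard_coe_finset]
      congr 1
      ext p
      simp only [Finset.coe_filter, Set.mem_setOf_eq, hT, Finset.mem_range, hA', hlt,
        Set.mem_inter_iff, and_comm]
    set prt : ℕ → ℕ := fun p => if p % 2 = 0 then p + 1 else p - 1 with hprt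
    have hinv : ∀ p, prt (prt p) = p := by
      intro p; simp only [hprt]; split_ifs <;> omega
    have hprt_inj : Function.Injective prt := Function.LeftInverse.injective hinv
    have hswap : ∀ (g : ℝ) (p : ℕ), y (π p) = g → 2 * N ≤ p →
        y (π (prt p)) = -g ∧ 2 * N ≤ prt p := by
      intro g p hpg hpN
      rcases Nat.even_or_odd' p with ⟨n, hn | hn⟩
      · have hNn : N ≤ n := by omega
        have h1 := key n hNn
        have hpp : prt p = 2 * n + 1 := by simp only [hprt]; split_ifs <;> omega
        refine ⟨?_, by omega⟩
        rw [hpp, h1, ← hn, hpg]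
      · have hNn : N ≤ n := by omega
        have h1 := key n hNn
        have hpp : prt p = 2 * n := by simp only [hprt]; split_ifs <;> omega
        refine ⟨?_, by omega⟩
        rw [hn] at hpg
        rw [hpg] at h1
        rw [hpp]
        linarith
    have himg : prt '' (A \ lt2N) = A' \ lt2N := by
      apply Set.Subset.antisymm
      · rintro q ⟨p, ⟨hp1, hp2⟩, rfl⟩
        simp only [hA, Set.mem_setOf_eq] at hp1
        simp only [hlt, Set.mem_setOf_eq, not_lt] at hp2
        obtain ⟨hq1, hq2⟩ := hswap f p hp1 hp2
        exact ⟨hq1, by simp only [hlt, Set.mem_setOf_eq]; omega⟩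
      · rintro q ⟨hq1, hq2⟩
        simp only [hA', Set.mem_setOf_eq] at hq1
        simp only [hlt, Set.mem_setOf_eq, not_lt] at hq2
        obtain ⟨hp1, hp2⟩ := hswap (-f) q hq1 hq2
        rw [neg_neg] at hp1
        exact ⟨prt q, ⟨hp1, by simp only [hlt, Set.mem_setOf_eq]; omega⟩, hinv q⟩
    have htail : (A \ lt2N).ncard = (A' \ lt2N).ncard := by
      rw [← himg, Set.ncard_image_of_injective _ hprt_inj]
    rw [hcntf, hcntf']
    omega
  set Wgood : Finset ℝ := Wpos.filter (fun f => {k : ℕ | u k = f}.Infinite) with hWgood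
  have hsum3 : S N = ∑ f ∈ Wgood, ((cnt f : ℝ) - (cnt (-f) : ℝ)) * f := by
    rw [hsum2]
    symm
    apply Finset.sum_subset (Finset.filter_subset _ _)
    intro f hf hnf
    have hfin : {k : ℕ | u k = f}.Finite := by
      by_contra h
      exact hnf (Finset.mem_filter.mpr ⟨hf, h⟩)
    rw [hfo f hf hfin]
    ring
  have hparity : Even (∑ f ∈ Wgood, ((cnt f : ℤ) - (cnt (-f) : ℤ))) := by
    have htot : ∑ f ∈ Wpos, ((cnt f : ℤ) + (cnt (-f) : ℤ)) = 2 * N := by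
      have h := congrArg (fun n : ℕ => (n : ℤ)) hcard2
      push_cast at h
      exact h
    have hsplit := Finset.sum_filter_add_sum_filter_not Wpos
      (fun f => {k : ℕ | u k = f}.Infinite) (fun f => (cnt f : ℤ) + (cnt (-f) : ℤ))
    have hrest : Even (∑ f ∈ Wpos.filter (fun f => ¬{k : ℕ | u k = f}.Infinite),
        ((cnt f : ℤ) + (cnt (-f) : ℤ))) := by
      apply Finset.even_sum
      intro f hf
      obtain ⟨hf1, hf2⟩ := Finset.mem_filter.mp hf
      rw [Set.not_infinite] at hf2
      rw [← hfo f hf1 hf2]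
      exact ⟨(cnt f : ℤ), by ring⟩
    have hgood : Even (∑ f ∈ Wgood, ((cnt f : ℤ) + (cnt (-f) : ℤ))) := by
      have h2N : Even ((2 * N : ℤ)) := ⟨N, by ring⟩
      rw [← htot, ← hsplit] at h2N
      rcases Int.even_add.mp h2N with h
      exact h.mpr hrest
    have hdiffe : Even ((∑ f ∈ Wgood, ((cnt f : ℤ) + (cnt (-f) : ℤ))) -
        (∑ f ∈ Wgood, ((cnt f : ℤ) - (cnt (-f) : ℤ)))) := by
      rw [← Finset.sum_sub_distrib]
      apply Finset.even_sum
      intro f _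
      exact ⟨(cnt (-f) : ℤ), by ring⟩
    exact (Int.even_sub.mp hdiffe).mp hgood
  refine ⟨Wgood.card, fun i => ((Wgood.equivFin.symm i : ℝ)),
    fun i => (cnt (Wgood.equivFin.symm i : ℝ) : ℤ) - (cnt (-(Wgood.equivFin.symm i : ℝ)) : ℤ),
    ?_, ?_, ?_⟩
  · intro i
    obtain ⟨hf1, hf2⟩ := Finset.mem_filter.mp (Wgood.equivFin.symm i).2
    constructor
    · obtain ⟨k, hk⟩ := hf2.nonempty
      exact Or.inl ⟨k, hk⟩
    · exact symser_order_infinite_pos u y hy hf2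
  · have heq : ∑ i, ((cnt (Wgood.equivFin.symm i : ℝ) : ℤ) - (cnt (-(Wgood.equivFin.symm i : ℝ)) : ℤ))
        = ∑ f ∈ Wgood, ((cnt f : ℤ) - (cnt (-f) : ℤ)) := by
      rw [← Finset.sum_coe_sort Wgood (fun f => (cnt f : ℤ) - (cnt (-f) : ℤ))]
      exact (Fintype.sum_equiv Wgood.equivFin _ _ (fun x => by rw [Equiv.symm_apply_apply])).symm
    rw [heq]
    exact hparity
  · have heq : ∑ i, ((((cnt (Wgood.equivFin.symm i : ℝ) : ℤ) - (cnt (-(Wgood.equivFin.symm i : ℝ)) : ℤ)) : ℝ))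
        * (Wgood.equivFin.symm i : ℝ)
        = ∑ f ∈ Wgood, ((cnt f : ℝ) - (cnt (-f) : ℝ)) * f := by
      rw [← Finset.sum_coe_sort Wgood (fun f => ((cnt f : ℝ) - (cnt (-f) : ℝ)) * f)]
      refine (Fintype.sum_equiv Wgood.equivFin _ _ (fun x => ?_)).symm
      rw [Equiv.symm_apply_apply]
      push_cast
      ring
    rw [hsS, hsum3, ← heq]
    apply Finset.sum_congr rfl
    intro i _
    push_cast
    ring

/-- Domain for the rearrangement used in the reverse inclusion. -/
abbrev RevDom (M : ℕ) (a : Fin M → ℕ) (P : ℕ → Prop) : Type :=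
  (Σ t : Fin M, Fin (a t)) ⊕ ((Fin M × ℕ ⊕ {k : ℕ // P k}) × Bool)

/-- The index map for the rearrangement used in the reverse inclusion. -/
def revV {M : ℕ} {a : Fin M → ℕ} {P : ℕ → Prop} (φ : Fin M → ℕ → ℕ)
    (pos : Fin M → Bool) : RevDom M a P → ℕ
  | .inl ⟨t, j⟩ => if pos t then 2 * φ t j else 2 * φ t j + 1
  | .inr (.inl (t, n), false) => if pos t then 2 * φ t n + 1 else 2 * φ t n
  | .inr (.inl (t, n), true) => if pos t then 2 * φ t (n + a t) else 2 * φ t (n + a t) + 1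
  | .inr (.inr k, false) => 2 * (k : ℕ)
  | .inr (.inr k, true) => 2 * (k : ℕ) + 1

lemma revV_injective {M : ℕ} {a : Fin M → ℕ} {P : ℕ → Prop} (φ : Fin M → ℕ → ℕ)
    (pos : Fin M → Bool)
    (hinj : ∀ t, Function.Injective (φ t))
    (hdisj : ∀ t t' n n', φ t n = φ t' n' → t = t')
    (hP : ∀ k, P k → ∀ t n, k ≠ φ t n) :
    Function.Injective (revV (a := a) (P := P) φ pos) := by
  rintro (⟨t, j⟩ | ⟨⟨t, n⟩ | ⟨k, hk⟩, _ | _⟩) (⟨t', j'⟩ | ⟨⟨t', n'⟩ | ⟨k', hk'⟩, _ | _⟩) h <;>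
    simp only [revV] at h
  -- L/L
  · split_ifs at h
    · have he : φ t ↑j = φ t' ↑j' := by omega
      obtain rfl := hdisj _ _ _ _ he
      obtain rfl := Fin.ext (hinj t he)
      rfl
    · omega
    · omega
    · have he : φ t ↑j = φ t' ↑j' := by omega
      obtain rfl := hdisj _ _ _ _ he
      obtain rfl := Fin.ext (hinj t he)
      rfl
  -- L/NF
  · split_ifs at h with h1 h2 h3
    · omega
    · have he : φ t ↑j = φ t' n' := by omega
      obtain rfl := hdisj _ _ _ _ he
      exact absurd h1 h2
    · have he : φ t ↑j = φ t' n' := by omega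
      obtain rfl := hdisj _ _ _ _ he
      exact absurd h3 h1
    · omega
  -- L/NT
  · have hj := j.isLt
    split_ifs at h with h1 h2
    · have he : φ t ↑j = φ t' (n' + a t') := by omega
      obtain rfl := hdisj _ _ _ _ he
      have := hinj t he
      omega
    · omega
    · omega
    · have he : φ t ↑j = φ t' (n' + a t') := by omega
      obtain rfl := hdisj _ _ _ _ he
      have := hinj t he
      omega
  -- L/KF
  · split_ifs at h
    · exact absurd (by omega : k' = φ t ↑j) (hP k' hk' t ↑j)
    · omega
  -- L/KT
  · split_ifs at h
    · omega
    · exact absurd (by omega : k' = φ t ↑j) (hP k' hk' t ↑j)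
  -- NF/L
  · split_ifs at h with h1 h2 h3
    · omega
    · have he : φ t n = φ t' ↑j' := by omega
      obtain rfl := hdisj _ _ _ _ he
      exact absurd h1 h2
    · have he : φ t n = φ t' ↑j' := by omega
      obtain rfl := hdisj _ _ _ _ he
      exact absurd h3 h1
    · omega
  -- NF/NF
  · split_ifs at h
    · have he : φ t n = φ t' n' := by omega
      obtain rfl := hdisj _ _ _ _ he
      obtain rfl := hinj t he
      rfl
    · omega
    · omega
    · have he : φ t n = φ t' n' := by omega
      obtain rfl := hdisj _ _ _ _ he
      obtain rfl := hinj t he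
      rfl
  -- NF/NT
  · split_ifs at h with h1 h2 h3
    · omega
    · have he : φ t n = φ t' (n' + a t') := by omega
      obtain rfl := hdisj _ _ _ _ he
      exact absurd h1 h2
    · have he : φ t n = φ t' (n' + a t') := by omega
      obtain rfl := hdisj _ _ _ _ he
      exact absurd h3 h1
    · omega
  -- NF/KF
  · split_ifs at h
    · omega
    · exact absurd (by omega : k' = φ t n) (hP k' hk' t n)
  -- NF/KT
  · split_ifs at h
    · exact absurd (by omega : k' = φ t n) (hP k' hk' t n)
    · omega
  -- NT/L
  · have hj := j'.isLt
    split_ifs at h with h1 h2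
    · have he : φ t (n + a t) = φ t' ↑j' := by omega
      obtain rfl := hdisj _ _ _ _ he
      have := hinj t he
      omega
    · omega
    · omega
    · have he : φ t (n + a t) = φ t' ↑j' := by omega
      obtain rfl := hdisj _ _ _ _ he
      have := hinj t he
      omega
  -- NT/NF
  · split_ifs at h with h1 h2 h3
    · omega
    · have he : φ t (n + a t) = φ t' n' := by omega
      obtain rfl := hdisj _ _ _ _ he
      exact absurd h1 h2
    · have he : φ t (n + a t) = φ t' n' := by omega
      obtain rfl := hdisj _ _ _ _ he
      exact absurd h3 h1
    · omega
  -- NT/NT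
  · split_ifs at h
    · have he : φ t (n + a t) = φ t' (n' + a t') := by omega
      obtain rfl := hdisj _ _ _ _ he
      have := hinj t he
      obtain rfl : n = n' := by omega
      rfl
    · omega
    · omega
    · have he : φ t (n + a t) = φ t' (n' + a t') := by omega
      obtain rfl := hdisj _ _ _ _ he
      have := hinj t he
      obtain rfl : n = n' := by omega
      rfl
  -- NT/KF
  · split_ifs at h
    · exact absurd (by omega : k' = φ t (n + a t)) (hP k' hk' t (n + a t))
    · omega
  -- NT/KT
  · split_ifs at h
    · omega
    · exact absurd (by omega : k' = φ t (n + a t)) (hP k' hk' t (n + a t))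
  -- KF/L
  · split_ifs at h
    · exact absurd (by omega : k = φ t' ↑j') (hP k hk t' ↑j')
    · omega
  -- KF/NF
  · split_ifs at h
    · omega
    · exact absurd (by omega : k = φ t' n') (hP k hk t' n')
  -- KF/NT
  · split_ifs at h
    · exact absurd (by omega : k = φ t' (n' + a t')) (hP k hk t' (n' + a t'))
    · omega
  -- KF/KF
  · obtain rfl : k = k' := by omega
    rfl
  -- KF/KT
  · omega
  -- KT/L
  · split_ifs at h
    · omega
    · exact absurd (by omega : k = φ t' ↑j') (hP k hk t' ↑j')
  -- KT/NF
  · split_ifs at h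
    · exact absurd (by omega : k = φ t' n') (hP k hk t' n')
    · omega
  -- KT/NT
  · split_ifs at h
    · omega
    · exact absurd (by omega : k = φ t' (n' + a t')) (hP k hk t' (n' + a t'))
  -- KT/KF
  · omega
  -- KT/KT
  · obtain rfl : k = k' := by omega
    rfl

lemma revV_surjective {M : ℕ} {a : Fin M → ℕ} {P : ℕ → Prop} (φ : Fin M → ℕ → ℕ)
    (pos : Fin M → Bool)
    (hcover : ∀ k, ¬ P k → ∃ t n, k = φ t n) :
    Function.Surjective (revV (a := a) (P := P) φ pos) := by
  intro x
  rcases Nat.even_or_odd' x with ⟨k, hk | hk⟩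
  · by_cases hPk : P k
    · exact ⟨.inr (.inr ⟨k, hPk⟩, false), by simp [revV]; omega⟩
    · obtain ⟨t, n, rfl⟩ := hcover k hPk
      cases hpos : pos t with
      | true =>
          rcases Nat.lt_or_ge n (a t) with hn | hn
          · exact ⟨.inl ⟨t, ⟨n, hn⟩⟩, by simp [revV, hpos]; omega⟩
          · refine ⟨.inr (.inl (t, n - a t), true), ?_⟩
            simp only [revV, hpos, if_true]
            rw [Nat.sub_add_cancel hn]
            omega
      | false =>
          exact ⟨.inr (.inl (t, n), false), by simp [revV, hpos]; omega⟩
  · by_cases hPk : P k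
    · exact ⟨.inr (.inr ⟨k, hPk⟩, true), by simp [revV]; omega⟩
    · obtain ⟨t, n, rfl⟩ := hcover k hPk
      cases hpos : pos t with
      | true =>
          exact ⟨.inr (.inl (t, n), false), by simp [revV, hpos]; omega⟩
      | false =>
          rcases Nat.lt_or_ge n (a t) with hn | hn
          · exact ⟨.inl ⟨t, ⟨n, hn⟩⟩, by simp [revV, hpos]; omega⟩
          · refine ⟨.inr (.inl (t, n - a t), true), ?_⟩
            simp only [revV, hpos, Bool.false_eq_true, if_false]
            rw [Nat.sub_add_cancel hn]
            omega

lemma symser_zero (u : ℕ → ℝ) (y : ℕ → ℝ)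
    (hy : ∀ k : ℕ, y (2 * k) = u k ∧ y (2 * k + 1) = -u k) :
    (0 : ℝ) ∈ SR2 y := by
  refine ⟨Equiv.refl ℕ, ?_⟩
  have h : ∀ n : ℕ, ∑ k ∈ Finset.range (2 * n), y k = 0 := by
    intro n
    induction n with
    | zero => simp
    | succ n ih =>
        have h2 : 2 * (n + 1) = 2 * n + 1 + 1 := by ring
        rw [h2, Finset.sum_range_succ, Finset.sum_range_succ, ih, (hy n).1, (hy n).2]
        ring
  simp only [Equiv.refl_apply, h]
  exact tendsto_const_nhds

lemma symser_rev (u : ℕ → ℝ) (hu : ∀ k, 0 < u k) (y : ℕ → ℝ)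
    (hy : ∀ k : ℕ, y (2 * k) = u k ∧ y (2 * k + 1) = -u k)
    (F : Finset ℝ) (G : ℝ → ℤ)
    (hF : ∀ f ∈ F, 0 < f ∧ {k : ℕ | u k = f}.Infinite)
    (hpar : Even (∑ f ∈ F, G f)) :
    (∑ f ∈ F, (G f : ℝ) * f) ∈ SR2 y := by
  classical
  set F₁ : Finset ℝ := F.filter (fun f => G f ≠ 0) with hF₁
  have hsum_eq : ∑ f ∈ F₁, (G f : ℝ) * f = ∑ f ∈ F, (G f : ℝ) * f :=
    Finset.sum_filter_of_ne (fun f _ h hG => h (by rw [hG]; simp))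
  have hpar1 : Even (∑ f ∈ F₁, G f) := by
    rwa [Finset.sum_filter_of_ne (fun f _ h => h)]
  rw [← hsum_eq]
  rcases Finset.eq_empty_or_nonempty F₁ with hFe | hFne
  · rw [hFe]
    simpa using symser_zero u y hy
  set M := F₁.card with hM
  have hM1 : 0 < M := Finset.card_pos.mpr hFne
  set ι : Fin M ≃ ↥F₁ := F₁.equivFin.symm with hι
  set f : Fin M → ℝ := fun t => (ι t : ℝ) with hfdef
  have hfF : ∀ t, f t ∈ F₁ := fun t => (ι t).2
  have hfF' : ∀ t, f t ∈ F := fun t => Finset.mem_of_mem_filter _ (hfF t)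
  have hfpos : ∀ t, 0 < f t := fun t => (hF _ (hfF' t)).1
  have hfinf : ∀ t, {k : ℕ | u k = f t}.Infinite := fun t => (hF _ (hfF' t)).2
  have hGne : ∀ t, G (f t) ≠ 0 := fun t => (Finset.mem_filter.mp (hfF t)).2
  have hfinj : Function.Injective f := fun t t' h => ι.injective (Subtype.ext h)
  set a : Fin M → ℕ := fun t => (G (f t)).natAbs with ha
  have ha1 : ∀ t, 1 ≤ a t := fun t => Int.natAbs_pos.mpr (hGne t)
  set φ : Fin M → ℕ → ℕ := fun t => Nat.nth (fun k => u k = f t) with hφ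
  have hφu : ∀ t n, u (φ t n) = f t := fun t n => Nat.nth_mem_of_infinite (hfinf t) n
  have hφinj : ∀ t, Function.Injective (φ t) := by
    intro t
    have hsm : StrictMono (φ t) := fun m n hmn => (Nat.nth_lt_nth (hfinf t)).mpr hmn
    exact hsm.injective
  have hdisj : ∀ t t' n n', φ t n = φ t' n' → t = t' := by
    intro t t' n n' h
    apply hfinj
    rw [← hφu t n, ← hφu t' n', h]
  set P : ℕ → Prop := fun k => ∀ t, u k ≠ f t with hPdef
  have hPφ : ∀ k, P k → ∀ t n, k ≠ φ t n := by
    intro k hk t n he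
    exact hk t (he ▸ hφu t n)
  have hcover : ∀ k, ¬ P k → ∃ t n, k = φ t n := by
    intro k hk
    simp only [hPdef] at hk
    push_neg at hk
    obtain ⟨t, ht⟩ := hk
    have hmem : k ∈ Set.range (Nat.nth (fun k => u k = f t)) := by
      rw [Nat.range_nth_of_infinite (hfinf t)]
      exact ht
    obtain ⟨n, hn⟩ := hmem
    exact ⟨t, n, hn.symm⟩
  set pos : Fin M → Bool := fun t => decide (0 < G (f t)) with hposdef
  have hVbij : Function.Bijective (revV (a := a) (P := P) φ pos) :=
    ⟨revV_injective φ pos hφinj hdisj hPφ, revV_surjective φ pos hcover⟩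
  set e2 : RevDom M a P ≃ ℕ := Equiv.ofBijective _ hVbij with he2
  set m : ℕ := ∑ t, a t with hm
  have hEcard : Fintype.card (Σ t : Fin M, Fin (a t)) = m := by
    simp [hm, Fintype.card_sigma]
  set E : (Σ t : Fin M, Fin (a t)) ≃ Fin m := Fintype.equivFinOfCardEq hEcard with hE
  haveI : Nonempty (Fin M) := ⟨⟨0, hM1⟩⟩
  haveI := (nonempty_denumerable (Fin M × ℕ ⊕ {k : ℕ // P k})).some
  set q : ℕ ≃ (Fin M × ℕ ⊕ {k : ℕ // P k}) := (Denumerable.eqv _).symm with hq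
  set toF : ℕ → RevDom M a P := fun k =>
    if h : k < m then .inl (E.symm ⟨k, h⟩)
    else .inr (q ((k - m) / 2), decide ((k - m) % 2 = 1)) with htoF
  set inv : RevDom M a P → ℕ := Sum.elim (fun x => (E x : ℕ))
    (fun ib => m + 2 * (q.symm ib.1) + (if ib.2 then 1 else 0)) with hinvdef
  have hleft : Function.LeftInverse inv toF := by
    intro k
    by_cases h : k < m
    · simp only [htoF, dif_pos h, hinvdef, Sum.elim_inl, Equiv.apply_symm_apply]
    · simp only [htoF, dif_neg h, hinvdef, Sum.elim_inr, Equiv.symm_apply_apply]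
      by_cases h2 : (k - m) % 2 = 1
      · rw [if_pos (by simpa using h2)]
        omega
      · rw [if_neg (by simpa using h2)]
        omega
  have hright : Function.RightInverse inv toF := by
    rintro (x | ⟨i, b⟩)
    · simp only [hinvdef, Sum.elim_inl, htoF]
      rw [dif_pos (x |> E |>.isLt)]
      congr 1
      rw [Fin.eta, Equiv.symm_apply_apply]
    · simp only [hinvdef, Sum.elim_inr, htoF]
      have hnlt : ¬ (m + 2 * (q.symm (i, b).1) + (if (i, b).2 then 1 else 0) < m) := by
        cases b <;> simp <;> omega
      rw [dif_neg hnlt]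
      cases b
      · have e1 : (m + 2 * (q.symm (i, false).1) + (if (i, false).2 then 1 else 0) - m) / 2
            = q.symm i := by simp <;> omega
        have e2' : decide ((m + 2 * (q.symm (i, false).1) +
            (if (i, false).2 then 1 else 0) - m) % 2 = 1) = false := by
          simp only [decide_eq_false_iff_not]
          simp <;> omega
        rw [e1, e2', Equiv.apply_symm_apply]
      · have e1 : (m + 2 * (q.symm (i, true).1) + (if (i, true).2 then 1 else 0) - m) / 2
            = q.symm i := by simp <;> omega
        have e2' : decide ((m + 2 * (q.symm (i, true).1) +
            (if (i, true).2 then 1 else 0) - m) % 2 = 1) = true := by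
          simp only [decide_eq_true_eq]
          simp <;> omega
        rw [e1, e2', Equiv.apply_symm_apply]
  set Ppos : ℕ ≃ RevDom M a P := ⟨toF, inv, hleft, hright⟩ with hPpos
  set π : Equiv.Perm ℕ := Ppos.trans e2 with hπ
  refine ⟨π, ?_⟩
  -- value computations
  have hπval : ∀ k, π k = revV (a := a) (P := P) φ pos (toF k) := fun k => rfl
  have hyφpos : ∀ t n, y (2 * φ t n) = f t := by
    intro t n
    rw [(hy (φ t n)).1, hφu]
  have hyφneg : ∀ t n, y (2 * φ t n + 1) = - f t := by
    intro t n
    rw [(hy (φ t n)).2, hφu]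
  -- prefix sum
  have hpre : ∑ k ∈ Finset.range m, y (π k) = ∑ t, (G (f t) : ℝ) * f t := by
    rw [← Fin.sum_univ_eq_sum_range (fun k => y (π k)) m]
    have hstep : ∀ i : Fin m, y (π i) = y (revV (a := a) (P := P) φ pos (.inl (E.symm i))) := by
      intro i
      rw [hπval]
      congr 1
      simp only [htoF, dif_pos i.isLt, Fin.eta]
    rw [Finset.sum_congr rfl (fun i _ => hstep i)]
    rw [Equiv.sum_comp E.symm (fun x => y (revV (a := a) (P := P) φ pos (.inl x)))]
    rw [← Finset.univ_sigma_univ, Finset.sum_sigma]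
    apply Finset.sum_congr rfl
    intro t _
    have hval : ∀ j : Fin (a t), y (revV (a := a) (P := P) φ pos (.inl ⟨t, j⟩))
        = (if pos t then f t else - f t) := by
      intro j
      cases hpt : pos t
      · simp only [revV, hpt, if_false, Bool.false_eq_true]
        exact hyφneg t j
      · simp only [revV, hpt, if_true]
        exact hyφpos t j
    rw [Finset.sum_congr rfl (fun j _ => hval j), Finset.sum_const, Finset.card_univ,
      Fintype.card_fin, nsmul_eq_mul]
    cases hpt : pos t
    · simp only [hposdef, decide_eq_false_iff_not] at hpt
      have hneg : G (f t) < 0 := by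
        have := hGne t
        omega
      have h5 : (a t : ℤ) = -G (f t) := by
        show ((G (f t)).natAbs : ℤ) = -G (f t)
        omega
      have hcast : ((a t : ℕ) : ℝ) = -(G (f t) : ℝ) := by
        exact_mod_cast congrArg (fun z : ℤ => (z : ℝ)) h5
      simp only [Bool.false_eq_true, if_false]
      rw [hcast]
      ring
    · simp only [hposdef, decide_eq_true_eq] at hpt
      have h5 : (a t : ℤ) = G (f t) := by
        show ((G (f t)).natAbs : ℤ) = G (f t)
        omega
      have hcast : ((a t : ℕ) : ℝ) = (G (f t) : ℝ) := by
        exact_mod_cast congrArg (fun z : ℤ => (z : ℝ)) h5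
      simp only [if_true]
      rw [hcast]
  -- pair cancellation
  have hpair : ∀ i : ℕ, y (π (m + 2 * i)) + y (π (m + 2 * i + 1)) = 0 := by
    intro i
    have e1 : (m + 2 * i - m) / 2 = i := by omega
    have e2a : decide ((m + 2 * i - m) % 2 = 1) = false := by
      simp only [decide_eq_false_iff_not]
      omega
    have e3 : (m + 2 * i + 1 - m) / 2 = i := by omega
    have e4 : decide ((m + 2 * i + 1 - m) % 2 = 1) = true := by
      simp only [decide_eq_true_eq]
      omega
    have h1 : toF (m + 2 * i) = .inr (q i, false) := by
      rw [htoF]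
      simp only [dif_neg (by omega : ¬ (m + 2 * i < m))]
      rw [e1, e2a]
    have h2 : toF (m + 2 * i + 1) = .inr (q i, true) := by
      rw [htoF]
      simp only [dif_neg (by omega : ¬ (m + 2 * i + 1 < m))]
      rw [e3, e4]
    rw [hπval, hπval, h1, h2]
    rcases q i with ⟨t, n⟩ | ⟨k, hk⟩
    · cases hpt : pos t
      · simp only [revV, hpt, Bool.false_eq_true, if_false]
        rw [hyφpos t n, hyφneg t (n + a t)]
        ring
      · simp only [revV, hpt, if_true]
        rw [hyφneg t n, hyφpos t (n + a t)]
        ring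
    · simp only [revV]
      rw [(hy k).1, (hy k).2]
      ring
  -- m is even
  have hmev : Even m := by
    rw [← Int.even_coe_nat]
    have h1 : (m : ℤ) = ∑ t, (a t : ℤ) := by
      rw [hm]
      push_cast
      rfl
    have h2 : ∑ t, (a t : ℤ) = (∑ t, G (f t)) + ∑ t, ((a t : ℤ) - G (f t)) := by
      rw [← Finset.sum_add_distrib]
      ring_nf
    have h3 : Even (∑ t, ((a t : ℤ) - G (f t))) := by
      apply Finset.even_sum
      intro t _
      have h5 : (a t : ℤ) = ((G (f t)).natAbs : ℤ) := rfl
      rcases le_or_gt 0 (G (f t)) with h | h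
      · exact ⟨0, by rw [h5]; omega⟩
      · exact ⟨-G (f t), by rw [h5]; omega⟩
    have h4 : Even (∑ t, G (f t)) := by
      have htrans : ∑ t, G (f t) = ∑ x ∈ F₁, G x := by
        rw [← Finset.sum_coe_sort F₁ G]
        exact Fintype.sum_equiv ι (fun t => G (f t)) (fun x => G (x : ℝ)) (fun t => rfl)
      rw [htrans]
      exact_mod_cast hpar1
    rw [h1, h2]
    exact h4.add h3
  obtain ⟨m0, hm0⟩ := hmev
  have hmain : ∀ j : ℕ, ∑ k ∈ Finset.range (m + 2 * j), y (π k)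
      = ∑ t, (G (f t) : ℝ) * f t := by
    intro j
    induction j with
    | zero => simpa using hpre
    | succ j ih =>
        have h2 : m + 2 * (j + 1) = (m + 2 * j) + 1 + 1 := by ring
        rw [h2, Finset.sum_range_succ, Finset.sum_range_succ, ih]
        have h3 := hpair j
        have h4 : m + 2 * j + 1 = (m + 2 * j) + 1 := rfl
        rw [h4] at h3
        linarith
  have hfin : ∑ t, (G (f t) : ℝ) * f t = ∑ x ∈ F₁, (G x : ℝ) * x := by
    rw [← Finset.sum_coe_sort F₁ (fun x => (G x : ℝ) * x)]
    exact Fintype.sum_equiv ι _ _ (fun t => rfl)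
  apply Tendsto.congr' _ tendsto_const_nhds
  filter_upwards [eventually_ge_atTop m0] with n hn
  have h2 : 2 * n = m + 2 * (n - m0) := by omega
  rw [h2, hmain (n - m0), hfin]

/-- The symmetric series built from positive reals `(u_k)`:
`y (2*k) = u k` and `y (2*k+1) = -u k` (0-indexed). -/
theorem SR2_separated_infinite_order (u : ℕ → ℝ) (hu : ∀ k, 0 < u k)
    (y : ℕ → ℝ) (hy : ∀ k : ℕ, y (2 * k) = u k ∧ y (2 * k + 1) = -u k)
    (ε : ℝ) (hε : ε > 0)
    (hsep : IsSeparated' ε (Set.range u ∪ Set.range (fun k => -u k)))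
    (hinf : ∃ e ∈ Set.range u ∪ Set.range (fun k => -u k),
      {n : ℕ | y n = e}.Infinite) :
    SR2 y = {s : ℝ | ∃ (r : ℕ) (e : Fin r → ℝ) (c : Fin r → ℤ),
      (∀ i, e i ∈ Set.range u ∪ Set.range (fun k => -u k) ∧
        {n : ℕ | y n = e i}.Infinite) ∧
      Even (∑ i, c i) ∧ s = ∑ i, (c i : ℝ) * e i} := by
  classical
  ext s
  simp only [Set.mem_setOf_eq]
  constructor
  · intro hs
    exact symser_fwd u hu y hy ε hε hsep hs
  · rintro ⟨r, e, c, he, hev, rfl⟩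
    have heX : ∀ i, e i ∈ Set.range u ∪ Set.range (fun k => -u k) := fun i => (he i).1
    have hene : ∀ i, e i ≠ 0 := fun i => symser_X_pos u hu (heX i)
    have habs : ∀ i, 0 < |e i| := fun i => abs_pos.mpr (hene i)
    have hKinf : ∀ i, {k : ℕ | u k = |e i|}.Infinite :=
      fun i => symser_K_infinite u hu y hy (he i).2
    set F : Finset ℝ := Finset.image (fun i => |e i|) Finset.univ with hF
    set G : ℝ → ℤ := fun x => ∑ i, if |e i| = x then (if 0 < e i then c i else -c i) else 0
      with hG
    have hFs : ∀ f ∈ F, 0 < f ∧ {k : ℕ | u k = f}.Infinite := by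
      intro f hf
      obtain ⟨i, _, rfl⟩ := Finset.mem_image.mp hf
      exact ⟨habs i, hKinf i⟩
    have hmemF : ∀ i, |e i| ∈ F := fun i => Finset.mem_image_of_mem _ (Finset.mem_univ i)
    have hGsum : ∑ f ∈ F, G f = ∑ i, (if 0 < e i then c i else -c i) := by
      rw [hG, Finset.sum_comm]
      apply Finset.sum_congr rfl
      intro i _
      rw [Finset.sum_ite_eq F |e i| (fun _ => (if 0 < e i then c i else -c i))]
      exact if_pos (hmemF i)
    have hGeven : Even (∑ f ∈ F, G f) := by
      rw [hGsum]
      have hdiff : Even ((∑ i, (if 0 < e i then c i else -c i)) - ∑ i, c i) := by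
        rw [← Finset.sum_sub_distrib]
        apply Finset.even_sum
        intro i _
        by_cases h : 0 < e i
        · simp [h]
        · simp only [h, if_false]
          exact ⟨-c i, by ring⟩
      exact (Int.even_sub.mp hdiff).mpr hev
    have hGveq : ∑ f ∈ F, (G f : ℝ) * f = ∑ i, (c i : ℝ) * e i := by
      have hcast : ∀ f, (G f : ℝ)
          = ∑ i, if |e i| = f then (if 0 < e i then (c i : ℝ) else -(c i : ℝ)) else 0 := by
        intro f
        rw [hG]
        push_cast
        rfl
      rw [Finset.sum_congr rfl (fun f _ => by rw [hcast f, Finset.sum_mul])]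
      rw [Finset.sum_comm]
      apply Finset.sum_congr rfl
      intro i _
      have h1 : ∀ f : ℝ, (if |e i| = f then (if 0 < e i then (c i : ℝ) else -(c i : ℝ)) else 0) * f
          = if |e i| = f then (if 0 < e i then (c i : ℝ) else -(c i : ℝ)) * f else 0 := by
        intro f
        split_ifs <;> simp
      rw [Finset.sum_congr rfl (fun f _ => h1 f)]
      rw [Finset.sum_ite_eq F |e i| (fun f => (if 0 < e i then (c i : ℝ) else -(c i : ℝ)) * f)]
      rw [if_pos (hmemF i)]
      by_cases h : 0 < e i
      · rw [if_pos h, abs_of_pos h]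
      · have hlt : e i < 0 := lt_of_le_of_ne (not_lt.mp h) (hene i)
        rw [if_neg h, abs_of_neg hlt]
        ring
    rw [← hGveq]
    exact symser_rev u hu y hy F G hFs hGeven
end

section
/- Let (u_k) be a sequence of positive reals and let (y_n) be the symmetric series built from (u_k), i.e. y_{2k−1} = u_k and y_{2k} = −u_k. Suppose the set X = {u_k : k ∈ ℕ} ∪ {−u_k : k ∈ ℕ} is ε-separated for some ε > 0 and that no value occurs with infinite order (i.e. for every e ∈ X the set {n : y_n = e} is finite). Then SR_2(Σ y_n) = {0}. -/
open Filter Topology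

private lemma parity_y (u : ℕ → ℝ) (y : ℕ → ℝ)
    (hy : ∀ k : ℕ, y (2 * k) = u k ∧ y (2 * k + 1) = -u k) (p : ℕ) :
    (p % 2 = 0 ∧ y p = u (p / 2)) ∨ (p % 2 = 1 ∧ y p = -u (p / 2)) := by
  rcases Nat.mod_two_eq_zero_or_one p with h | h
  · left
    refine ⟨h, ?_⟩
    have hp : p = 2 * (p / 2) := by omega
    calc y p = y (2 * (p / 2)) := by rw [← hp]
    _ = u (p / 2) := (hy _).1
  · right
    refine ⟨h, ?_⟩
    have hp : p = 2 * (p / 2) + 1 := by omega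
    calc y p = y (2 * (p / 2) + 1) := by rw [← hp]
    _ = -u (p / 2) := (hy _).2

private lemma msum_neg (s : Multiset ℝ) : (s.map (fun x => -x)).sum = -s.sum := by
  induction s using Multiset.induction with
  | empty => simp
  | cons a s ih => simp [ih]; ring

/-- The symmetric series built from positive reals `(u_k)`:
`y (2*k) = u k` and `y (2*k+1) = -u k` (0-indexed). -/
theorem SR2_separated_no_infinite_order (u : ℕ → ℝ) (hu : ∀ k, 0 < u k)
    (y : ℕ → ℝ) (hy : ∀ k : ℕ, y (2 * k) = u k ∧ y (2 * k + 1) = -u k)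
    (ε : ℝ) (hε : ε > 0)
    (hsep : IsSeparated' ε (Set.range u ∪ Set.range (fun k => -u k)))
    (hfin : ∀ e ∈ Set.range u ∪ Set.range (fun k => -u k),
      {n : ℕ | y n = e}.Finite) :
    SR2 y = {0} := by
  have hy2 := parity_y u y hy
  apply Set.eq_singleton_iff_unique_mem.mpr
  constructor
  · -- 0 ∈ SR2 y
    refine ⟨Equiv.refl ℕ, ?_⟩
    have hz : ∀ n : ℕ, ∑ k ∈ Finset.range (2 * n), y ((Equiv.refl ℕ) k) = 0 := by
      intro n
      induction n with
      | zero => simp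
      | succ n ih =>
        have h2 : 2 * (n + 1) = 2 * n + 1 + 1 := by ring
        rw [h2, Finset.sum_range_succ, Finset.sum_range_succ, ih]
        simp only [Equiv.refl_apply]
        rw [(hy n).1, (hy n).2]
        ring
    have hfun : (fun n : ℕ => ∑ k ∈ Finset.range (2 * n), y ((Equiv.refl ℕ) k))
        = fun _ : ℕ => (0:ℝ) := funext hz
    rw [hfun]
    exact tendsto_const_nhds
  · rintro t ⟨π, hs⟩
    set S : ℕ → ℝ := fun n => ∑ k ∈ Finset.range (2 * n), y (π k) with hSdef
    -- (a) fibers and sublevel sets of u are finite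
    have hXfin : ∀ v : ℝ, v ∈ Set.range u → {k : ℕ | u k = v}.Finite := by
      intro v hv
      have h1 : {n : ℕ | y n = v}.Finite := hfin v (Or.inl hv)
      apply Set.Finite.of_finite_image (f := fun k => 2 * k)
      · apply h1.subset
        rintro n ⟨k, hk, rfl⟩
        exact (hy k).1.trans hk
      · intro a _ b _ h
        have h' : 2 * a = 2 * b := h
        omega
    have hbound : ∀ M : ℝ, {k : ℕ | u k ≤ M}.Finite := by
      intro M
      have hVfin : {v : ℝ | v ∈ Set.range u ∧ v ≤ M}.Finite := by
        apply Set.Finite.of_finite_image (f := fun v => ⌊v / ε⌋)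
        · apply (Set.finite_Icc (0 : ℤ) ⌊M / ε⌋).subset
          rintro z ⟨v, ⟨⟨k, rfl⟩, hvM⟩, rfl⟩
          rw [Set.mem_Icc]
          constructor
          · exact Int.floor_nonneg.mpr (div_nonneg (hu k).le hε.le)
          · exact Int.floor_le_floor ((div_le_div_iff_of_pos_right hε).mpr hvM)
        · intro a ha b hb hab
          by_contra hne
          have h1 : ε < |a - b| :=
            hsep a (Set.mem_union_left _ ha.1) b (Set.mem_union_left _ hb.1) hne
          have h2 : |a / ε - b / ε| < 1 := Int.abs_sub_lt_one_of_floor_eq_floor hab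
          have h3 : a / ε - b / ε = (a - b) / ε := by ring
          rw [h3, abs_div, abs_of_pos hε] at h2
          have h4 : |a - b| < ε := (div_lt_one hε).mp h2
          linarith
      apply (hVfin.biUnion (fun v hv => hXfin v hv.1)).subset
      intro k hk
      exact Set.mem_biUnion ⟨⟨k, rfl⟩, hk⟩ rfl
    -- eventual largeness of u (π m / 2)
    have hπ : Tendsto (fun m => π m) atTop atTop := by
      have := π.injective.tendsto_cofinite
      rwa [Nat.cofinite_eq_atTop] at this
    have hlarge : ∀ M : ℝ, ∀ᶠ m in atTop, M < u (π m / 2) := by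
      intro M
      obtain ⟨K, hK⟩ := (hbound M).bddAbove
      filter_upwards [hπ.eventually_ge_atTop (2 * (K + 1))] with m hm
      by_contra h
      push_neg at h
      have hx : π m / 2 ≤ K := hK (show (π m / 2) ∈ {k : ℕ | u k ≤ M} from h)
      omega
    -- differences of consecutive partial sums
    have hdiff : ∀ n : ℕ, S (n + 1) - S n = y (π (2 * n)) + y (π (2 * n + 1)) := by
      intro n
      have h2 : 2 * (n + 1) = 2 * n + 1 + 1 := by ring
      simp only [hSdef, h2, Finset.sum_range_succ]
      ring
    have htend0 : Tendsto (fun n => y (π (2 * n)) + y (π (2 * n + 1))) atTop (nhds 0) := by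
      have h1 : Tendsto (fun n => S (n + 1) - S n) atTop (nhds (t - t)) :=
        (hs.comp (tendsto_add_atTop_nat 1)).sub hs
      rw [sub_self] at h1
      exact h1.congr hdiff
    -- eventually the increments vanish exactly
    have hev : ∀ᶠ n : ℕ in atTop, y (π (2 * n)) + y (π (2 * n + 1)) = 0 := by
      have h1 : ∀ᶠ n : ℕ in atTop, |y (π (2 * n)) + y (π (2 * n + 1))| < ε := by
        obtain ⟨N, hN⟩ := Metric.tendsto_atTop.mp htend0 ε hε
        filter_upwards [eventually_ge_atTop N] with n hn
        have := hN n hn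
        rwa [Real.dist_eq, sub_zero] at this
      have hm1 : Tendsto (fun n : ℕ => 2 * n) atTop atTop :=
        tendsto_atTop_mono (fun n => by simp only [id_eq]; omega) tendsto_id
      have hm2 : Tendsto (fun n : ℕ => 2 * n + 1) atTop atTop :=
        tendsto_atTop_mono (fun n => by simp only [id_eq]; omega) tendsto_id
      filter_upwards [h1, hm1.eventually (hlarge ε), hm2.eventually (hlarge ε)] with n habs ha hb
      have hua := hu (π (2 * n) / 2)
      have hub := hu (π (2 * n + 1) / 2)
      rcases hy2 (π (2 * n)) with ⟨_, hA1⟩ | ⟨_, hA1⟩ <;>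
        rcases hy2 (π (2 * n + 1)) with ⟨_, hB1⟩ | ⟨_, hB1⟩ <;>
        rw [hA1, hB1] at habs ⊢
      · exfalso
        rw [abs_of_pos (by linarith)] at habs
        linarith
      · rcases eq_or_ne (u (π (2 * n) / 2)) (u (π (2 * n + 1) / 2)) with heq | hne
        · rw [heq]; ring
        · exfalso
          have h4 := hsep _ (Set.mem_union_left _ ⟨_, rfl⟩) _ (Set.mem_union_left _ ⟨_, rfl⟩) hne
          rw [show u (π (2 * n) / 2) + -u (π (2 * n + 1) / 2)
              = u (π (2 * n) / 2) - u (π (2 * n + 1) / 2) from by ring] at habs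
          linarith
      · rcases eq_or_ne (u (π (2 * n) / 2)) (u (π (2 * n + 1) / 2)) with heq | hne
        · rw [heq]; ring
        · exfalso
          have h4 := hsep _ (Set.mem_union_left _ ⟨_, rfl⟩) _ (Set.mem_union_left _ ⟨_, rfl⟩) hne
          rw [show -u (π (2 * n) / 2) + u (π (2 * n + 1) / 2)
              = -(u (π (2 * n) / 2) - u (π (2 * n + 1) / 2)) from by ring, abs_neg] at habs
          linarith
      · exfalso
        rw [show -u (π (2 * n) / 2) + -u (π (2 * n + 1) / 2)
            = -(u (π (2 * n) / 2) + u (π (2 * n + 1) / 2)) from by ring, abs_neg,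
          abs_of_pos (by linarith)] at habs
        linarith
    obtain ⟨n0, hn0⟩ := eventually_atTop.mp hev
    -- partial sums stabilize
    have hconst : ∀ n, n0 ≤ n → S n = S n0 := by
      intro n hn
      induction n, hn using Nat.le_induction with
      | base => rfl
      | succ n hn ih =>
        have h1 := hdiff n
        have h2 := hn0 n hn
        linarith
    have hsval : t = S n0 := by
      refine tendsto_nhds_unique hs (Tendsto.congr' ?_ tendsto_const_nhds)
      filter_upwards [eventually_ge_atTop n0] with n hn
      exact (hconst n hn).symm
    -- the finite set of used positions
    set A : Finset ℕ := (Finset.range (2 * n0)).image π with hAdef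
    have hSA : ∑ p ∈ A, y p = S n0 := Finset.sum_image (fun a _ b _ h => π.injective h)
    have hmemA : ∀ p : ℕ, p ∈ A ↔ π.symm p < 2 * n0 := by
      intro p
      simp only [hAdef, Finset.mem_image, Finset.mem_range]
      constructor
      · rintro ⟨k, hk, rfl⟩; simpa using hk
      · intro h; exact ⟨π.symm p, h, π.apply_symm_apply p⟩
    -- the pairing involution
    set pt : ℕ → ℕ := fun m => if m % 2 = 0 then m + 1 else m - 1 with hptdef
    have hpt2 : ∀ m, pt (pt m) = m := by
      intro m; simp only [hptdef]; split_ifs <;> omega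
    have hptdiv : ∀ m, (m = 2 * (m / 2) ∧ pt m = 2 * (m / 2) + 1) ∨
        (m = 2 * (m / 2) + 1 ∧ pt m = 2 * (m / 2)) := by
      intro m; simp only [hptdef]; split_ifs with h
      · left; omega
      · right; omega
    have hptge : ∀ m, 2 * n0 ≤ m → 2 * n0 ≤ pt m := by
      intro m hm; simp only [hptdef]; split_ifs <;> omega
    have hstep : ∀ m, 2 * n0 ≤ m → y (π (pt m)) = -y (π m) := by
      intro m hm
      have hn : n0 ≤ m / 2 := by omega
      have h0 := hn0 (m / 2) hn
      rcases hptdiv m with ⟨h1, h2⟩ | ⟨h1, h2⟩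
      · have e1 : y (π m) = y (π (2 * (m / 2))) := by rw [← h1]
        rw [h2]; linarith
      · have e1 : y (π m) = y (π (2 * (m / 2) + 1)) := by rw [← h1]
        rw [h2]; linarith
    set g : ℕ → ℕ := fun p => π (pt (π.symm p)) with hgdef
    have hg : ∀ p, p ∉ A → (y (g p) = -y p ∧ g p ∉ A ∧ g (g p) = p) := by
      intro p hp
      have hm : 2 * n0 ≤ π.symm p := by
        by_contra h; push_neg at h; exact hp ((hmemA p).mpr h)
      have hsymm : π.symm (g p) = pt (π.symm p) := by
        simp only [hgdef, Equiv.symm_apply_apply]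
      refine ⟨?_, ?_, ?_⟩
      · have h := hstep (π.symm p) hm
        rw [Equiv.apply_symm_apply] at h
        simpa only [hgdef] using h
      · intro hmem
        have := (hmemA _).mp hmem
        rw [hsymm] at this
        have := hptge _ hm
        omega
      · simp only [hgdef, hsymm, hpt2, Equiv.apply_symm_apply, Equiv.symm_apply_apply]
    -- counting: each value and its negative occur equally often in A
    have hcount : ∀ v : ℝ,
        (A.filter (fun p => y p = v)).card = (A.filter (fun p => y p = -v)).card := by
      have key : ∀ v : ℝ, v ∈ Set.range u →
          (A.filter (fun p => y p = v)).card = (A.filter (fun p => y p = -v)).card := by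
        intro v hv
        have hvpos : 0 < v := by obtain ⟨k, rfl⟩ := hv; exact hu k
        have hvX : v ∈ Set.range u ∪ Set.range (fun k => -u k) := Set.mem_union_left _ hv
        have hvX' : -v ∈ Set.range u ∪ Set.range (fun k => -u k) := by
          obtain ⟨k, rfl⟩ := hv; exact Set.mem_union_right _ ⟨k, rfl⟩
        set Fv := (hfin v hvX).toFinset with hFvdef
        set Fm := (hfin (-v) hvX').toFinset with hFmdef
        have hFvmem : ∀ p, p ∈ Fv ↔ y p = v := fun p => Set.Finite.mem_toFinset _
        have hFmmem : ∀ p, p ∈ Fm ↔ y p = -v := fun p => Set.Finite.mem_toFinset _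
        have hFvpar : ∀ p, y p = v → p % 2 = 0 ∧ u (p / 2) = v := by
          intro p hp
          rcases hy2 p with ⟨h1, h2⟩ | ⟨h1, h2⟩
          · exact ⟨h1, by rw [← h2]; exact hp⟩
          · exfalso; have := hu (p / 2); rw [h2] at hp; linarith
        have hFmpar : ∀ p, y p = -v → p % 2 = 1 ∧ u (p / 2) = v := by
          intro p hp
          rcases hy2 p with ⟨h1, h2⟩ | ⟨h1, h2⟩
          · exfalso; have := hu (p / 2); rw [h2] at hp; linarith
          · refine ⟨h1, ?_⟩; rw [h2] at hp; linarith
        have hc1 : Fv.card = Fm.card := by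
          refine Finset.card_bij' (fun p _ => p + 1) (fun q _ => q - 1) ?_ ?_ ?_ ?_
          · intro p hp
            obtain ⟨h1, h2⟩ := hFvpar p ((hFvmem p).mp hp)
            show p + 1 ∈ Fm
            rw [hFmmem]
            rw [show p + 1 = 2 * (p / 2) + 1 from by omega, (hy (p / 2)).2, h2]
          · intro q hq
            obtain ⟨h1, h2⟩ := hFmpar q ((hFmmem q).mp hq)
            show q - 1 ∈ Fv
            rw [hFvmem]
            rw [show q - 1 = 2 * (q / 2) from by omega, (hy (q / 2)).1, h2]
          · intro p hp
            show p + 1 - 1 = p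
            omega
          · intro q hq
            have := hFmpar q ((hFmmem q).mp hq)
            show q - 1 + 1 = q
            omega
        have hc2 : (Fv \ A).card = (Fm \ A).card := by
          refine Finset.card_bij' (fun p _ => g p) (fun q _ => g q) ?_ ?_ ?_ ?_
          · intro p hp
            rw [Finset.mem_sdiff] at hp ⊢
            obtain ⟨hp1, hp2⟩ := hp
            obtain ⟨hg1, hg2, _⟩ := hg p hp2
            refine ⟨?_, hg2⟩
            rw [hFmmem, hg1, (hFvmem p).mp hp1]
          · intro q hq
            rw [Finset.mem_sdiff] at hq ⊢
            obtain ⟨hq1, hq2⟩ := hq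
            obtain ⟨hg1, hg2, _⟩ := hg q hq2
            refine ⟨?_, hg2⟩
            rw [hFvmem, hg1, (hFmmem q).mp hq1]
            ring
          · intro p hp
            rw [Finset.mem_sdiff] at hp
            exact (hg p hp.2).2.2
          · intro q hq
            rw [Finset.mem_sdiff] at hq
            exact (hg q hq.2).2.2
        have e1 : A.filter (fun p => y p = v) = Fv ∩ A := by
          ext p
          simp only [Finset.mem_filter, Finset.mem_inter, hFvmem p]
          tauto
        have e2 : A.filter (fun p => y p = -v) = Fm ∩ A := by
          ext p
          simp only [Finset.mem_filter, Finset.mem_inter, hFmmem p]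
          tauto
        have c1 := Finset.card_inter_add_card_sdiff Fv A
        have c2 := Finset.card_inter_add_card_sdiff Fm A
        rw [e1, e2]
        omega
      intro v
      by_cases hv : v ∈ Set.range u
      · exact key v hv
      · by_cases hv' : -v ∈ Set.range u
        · have h := key (-v) hv'
          rw [neg_neg] at h
          exact h.symm
        · have h1 : A.filter (fun p => y p = v) = ∅ := by
            rw [Finset.filter_eq_empty_iff]
            intro p _ hpv
            rcases hy2 p with ⟨_, h2⟩ | ⟨_, h2⟩
            · exact hv ⟨p / 2, by rw [← h2]; exact hpv⟩
            · refine hv' ⟨p / 2, ?_⟩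
              rw [h2] at hpv; linarith
          have h2 : A.filter (fun p => y p = -v) = ∅ := by
            rw [Finset.filter_eq_empty_iff]
            intro p _ hpv
            rcases hy2 p with ⟨_, h2⟩ | ⟨_, h2⟩
            · refine hv' ⟨p / 2, ?_⟩
              rw [← h2]; exact hpv
            · refine hv ⟨p / 2, ?_⟩
              rw [h2] at hpv; linarith
          rw [h1, h2]
    -- the sum over A is zero
    have hsum0 : ∑ p ∈ A, y p = 0 := by
      have hMS : (A.val.map y).map (fun x => -x) = A.val.map y := by
        apply Multiset.ext.mpr
        intro w
        have e1 : Multiset.count w ((A.val.map y).map (fun x => -x))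
            = Multiset.count (-w) (A.val.map y) := by
          have := Multiset.count_map_eq_count' (fun x : ℝ => -x) (A.val.map y)
            neg_injective (-w)
          simpa using this
        have e2 : ∀ w' : ℝ, Multiset.count w' (A.val.map y)
            = (A.filter (fun p => y p = w')).card := by
          intro w'
          rw [Multiset.count_map]
          have hcf : (A.filter (fun p => y p = w')).card
              = Multiset.card (Multiset.filter (fun p => y p = w') A.val) := rfl
          rw [hcf]
          congr 1
          apply Multiset.filter_congr
          intro p _
          exact eq_comm
        rw [e1, e2, e2]
        exact (hcount w).symm
      have h3 : ∑ p ∈ A, y p = (A.val.map y).sum := Finset.sum_eq_multiset_sum A y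
      have h4 := msum_neg (A.val.map y)
      rw [hMS] at h4
      rw [h3]; linarith
    rw [hsval, ← hSA]
    exact hsum0
end
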